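/- arXiv:0907.5224 — 3 statements merged into one kernel-verified Lean document; each statement's English description precedes it below -/
import Mathlib

section
/- For |x| < 1/e, let t = t(x) = 1 + Σ_{k≥1} (k^k/k!) x^k with Re(t) > 1. Then w(t) := -1/t - log(1 - 1/t) satisfies e^{-(w+1)} = x; equivalently, w(t) = Σ_{m=2}^∞ (1/m) t^{-m} and e^{-(w(t)+1)} = (1 - 1/t) e^{-(1 - 1/t)}. -/
open scoped Nat

open Finset Filter Metric
open scoped Topology


open Finset

/-- Alternating sum of `C(n,k) k^j` vanishes for `j < n`. -/
lemma finite_diff_zero : ∀ n : ℕ, ∀ j : ℕ, j < n →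
    ∑ k ∈ range (n + 1), (-1 : ℝ) ^ k * (n.choose k) * (k : ℝ) ^ j = 0 := by
  intro n
  induction n with
  | zero => intro j hj; omega
  | succ n ih =>
    intro j hj
    match j with
    | 0 =>
      have h := Int.alternating_sum_range_choose_of_ne (Nat.succ_ne_zero n)
      have h2 : ((∑ i ∈ range (n + 2), (-1 : ℤ) ^ i * ((n+1).choose i) : ℤ) : ℝ) = 0 := by
        rw [h]; norm_num
      push_cast at h2
      simpa using h2
    | (j' + 1) =>
      have hc : ∀ k : ℕ, ((n+1).choose (k+1) : ℝ) * ((k:ℝ)+1) = ((n:ℝ)+1) * (n.choose k) := by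
        intro k
        have h := Nat.add_one_mul_choose_eq n k
        have h2 : ((Nat.succ n * n.choose k : ℕ) : ℝ) = (((n+1).choose (k+1) * (k+1) : ℕ) : ℝ) := by
          rw [h]
        push_cast at h2
        linarith
      have hexp : ∀ k : ℕ, ((k:ℝ) + 1) ^ j' = ∑ i ∈ range (j' + 1), (j'.choose i : ℝ) * (k : ℝ) ^ i := by
        intro k
        have h := add_pow (k : ℝ) 1 j'
        simp only [one_pow, mul_one] at h
        rw [h]
        exact Finset.sum_congr rfl fun i _ => by ring
      have hstep : ∑ k ∈ range (n + 2), (-1 : ℝ) ^ k * ((n+1).choose k) * (k : ℝ) ^ (j' + 1)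
          = ∑ k ∈ range (n + 1), (-1 : ℝ) ^ (k+1) * (((n:ℝ)+1) * (n.choose k)) * ((k:ℝ) + 1) ^ j' := by
        rw [Finset.sum_range_succ']
        have h0 : (-1 : ℝ) ^ 0 * (((n+1).choose 0 : ℕ) : ℝ) * ((0:ℕ) : ℝ) ^ (j' + 1) = 0 := by
          simp
        rw [h0, add_zero]
        apply Finset.sum_congr rfl
        intro k _
        have hck := hc k
        push_cast
        linear_combination ((-1:ℝ)^(k+1) * ((k:ℝ)+1)^j') * hck
      rw [hstep]
      calc ∑ k ∈ range (n + 1), (-1 : ℝ) ^ (k+1) * (((n:ℝ)+1) * (n.choose k)) * ((k:ℝ) + 1) ^ j'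
          = ∑ k ∈ range (n + 1), ∑ i ∈ range (j' + 1),
              (-((n:ℝ)+1)) * (j'.choose i) * ((-1 : ℝ) ^ k * (n.choose k) * (k : ℝ) ^ i) := by
            apply Finset.sum_congr rfl
            intro k _
            rw [hexp k, Finset.mul_sum]
            exact Finset.sum_congr rfl fun i _ => by ring
        _ = ∑ i ∈ range (j' + 1), ∑ k ∈ range (n + 1),
              (-((n:ℝ)+1)) * (j'.choose i) * ((-1 : ℝ) ^ k * (n.choose k) * (k : ℝ) ^ i) :=
            Finset.sum_comm
        _ = 0 := by
            apply Finset.sum_eq_zero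
            intro i hi
            rw [← Finset.mul_sum, ih i (by simp only [Finset.mem_range] at hi; omega)]
            ring


open Finset


lemma choose_mul_sub (n k : ℕ) (hk : k ≤ n) :
    (n + 1 - k) * (n + 1).choose k = (n + 1) * n.choose k := by
  have h1 : (n + 1).choose k = (n + 1).choose (n + 1 - k) := (Nat.choose_symm (by omega)).symm
  have h2 : n + 1 - k = (n - k) + 1 := by omega
  have h3 := Nat.add_one_mul_choose_eq n (n - k)
  have h4 : n.choose (n - k) = n.choose k := Nat.choose_symm hk
  rw [h1, h2, ← h4, mul_comm]
  exact h3.symm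

lemma abel_sum : ∀ n : ℕ, ∀ y : ℝ,
    ∑ k ∈ Icc 1 n, (n.choose k : ℝ) * (k : ℝ) ^ (k - 1) * (y + n - k) ^ (n - k)
      = n * (y + n) ^ (n - 1) := by
  intro n
  induction n with
  | zero => intro y; simp
  | succ n ih =>
    rcases Nat.eq_zero_or_pos n with rfl | hn
    · intro y; norm_num
    intro y
    -- the function whose derivative vanishes
    have hder : ∀ y : ℝ, HasDerivAt (fun y : ℝ =>
        (∑ k ∈ Icc 1 (n + 1), ((n+1).choose k : ℝ) * (k : ℝ) ^ (k - 1)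
          * (y + ((n:ℝ)+1) - k) ^ ((n+1) - k)) - ((n:ℝ) + 1) * (y + ((n:ℝ)+1)) ^ n) 0 y := by
      intro y
      have hterm : ∀ k ∈ Icc 1 (n+1), HasDerivAt
          (fun y : ℝ => ((n+1).choose k : ℝ) * (k : ℝ) ^ (k - 1) * (y + ((n:ℝ)+1) - k) ^ ((n+1) - k))
          (((n+1).choose k : ℝ) * (k : ℝ) ^ (k - 1) *
            ((((n+1) - k : ℕ) : ℝ) * (y + ((n:ℝ)+1) - k) ^ (((n+1) - k) - 1))) y := by
        intro k hk
        have hbase : HasDerivAt (fun y : ℝ => y + ((n:ℝ)+1) - k) 1 y := by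
          simpa using ((hasDerivAt_id y).add_const ((n:ℝ)+1)).sub_const (k : ℝ)
        have h := (hbase.pow ((n+1) - k)).const_mul (((n+1).choose k : ℝ) * (k : ℝ) ^ (k - 1))
        simpa [mul_one] using h
      have hg := HasDerivAt.sum hterm
      have hh : HasDerivAt (fun y : ℝ => ((n:ℝ) + 1) * (y + ((n:ℝ)+1)) ^ n)
          (((n:ℝ) + 1) * ((n : ℝ) * (y + ((n:ℝ)+1)) ^ (n - 1))) y := by
        have hbase : HasDerivAt (fun y : ℝ => y + ((n:ℝ)+1)) 1 y :=
          (hasDerivAt_id y).add_const ((n:ℝ)+1)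
        have h := (hbase.pow n).const_mul ((n:ℝ)+1)
        simpa [mul_one] using h
      have hsum_eq : (∑ k ∈ Icc 1 (n + 1), ((n+1).choose k : ℝ) * (k : ℝ) ^ (k - 1) *
            ((((n+1) - k : ℕ) : ℝ) * (y + ((n:ℝ)+1) - k) ^ (((n+1) - k) - 1)))
          = ((n:ℝ) + 1) * ((n : ℝ) * (y + ((n:ℝ)+1)) ^ (n - 1)) := by
        rw [Finset.sum_Icc_succ_top (by omega : 1 ≤ n + 1)]
        have htop : ((n+1).choose (n+1) : ℝ) * ((n+1 : ℕ) : ℝ) ^ ((n+1) - 1) *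
            ((((n+1) - (n+1) : ℕ) : ℝ) * (y + ((n:ℝ)+1) - ((n+1 : ℕ):ℝ)) ^ (((n+1) - (n+1)) - 1)) = 0 := by
          simp
        rw [htop, add_zero]
        have hstep : ∀ k ∈ Icc 1 n, ((n+1).choose k : ℝ) * (k : ℝ) ^ (k - 1) *
            ((((n+1) - k : ℕ) : ℝ) * (y + ((n:ℝ)+1) - k) ^ (((n+1) - k) - 1))
            = ((n:ℝ)+1) * ((n.choose k : ℝ) * (k : ℝ) ^ (k - 1) * ((y+1) + n - k) ^ (n - k)) := by
          intro k hk
          simp only [Finset.mem_Icc] at hk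
          have hle : k ≤ n + 1 := by omega
          have hc : ((n:ℝ) + 1 - k) * ((n + 1).choose k : ℝ) = ((n:ℝ) + 1) * (n.choose k : ℝ) := by
            have h' : (((n + 1 - k) * (n + 1).choose k : ℕ) : ℝ) = (((n + 1) * n.choose k : ℕ) : ℝ) := by
              rw [choose_mul_sub n k hk.2]
            push_cast [Nat.cast_sub hle] at h'
            linarith
          have he : ((n+1) - k) - 1 = n - k := by omega
          have he2 : (y + ((n:ℝ)+1) - k) = ((y+1) + n - k) := by push_cast; ring
          rw [he, he2, Nat.cast_sub hle]
          push_cast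
          linear_combination ((k:ℝ) ^ (k-1) * ((y+1) + (n:ℝ) - k) ^ (n-k)) * hc
        rw [Finset.sum_congr rfl hstep, ← Finset.mul_sum, ih (y + 1)]
        ring
      rw [hsum_eq] at hg
      have hgh := hg.sub hh
      rw [sub_self] at hgh
      exact hgh.congr_of_eventuallyEq (Filter.Eventually.of_forall fun z => by simp)
    -- constancy
    set F : ℝ → ℝ := fun y =>
        (∑ k ∈ Icc 1 (n + 1), ((n+1).choose k : ℝ) * (k : ℝ) ^ (k - 1)
          * (y + ((n:ℝ)+1) - k) ^ ((n+1) - k)) - ((n:ℝ) + 1) * (y + ((n:ℝ)+1)) ^ n with hF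
    have hconst : F y = F (-((n:ℝ)+1)) :=
      is_const_of_deriv_eq_zero (fun z => (hder z).differentiableAt) (fun z => (hder z).deriv) y _
    have hval : F (-((n:ℝ)+1)) = 0 := by
      show (∑ k ∈ Icc 1 (n + 1), ((n+1).choose k : ℝ) * (k : ℝ) ^ (k - 1)
          * ((-((n:ℝ)+1)) + ((n:ℝ)+1) - k) ^ ((n+1) - k))
          - ((n:ℝ) + 1) * ((-((n:ℝ)+1)) + ((n:ℝ)+1)) ^ n = 0
      have h0 : ((n:ℝ) + 1) * ((-((n:ℝ)+1)) + ((n:ℝ)+1)) ^ n = 0 := by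
        rw [neg_add_cancel, zero_pow (by omega : n ≠ 0)]; ring
      rw [h0, sub_zero]
      have hterm : ∀ k ∈ Icc 1 (n+1),
          ((n+1).choose k : ℝ) * (k : ℝ) ^ (k - 1) * ((-((n:ℝ)+1)) + ((n:ℝ)+1) - k) ^ ((n+1) - k)
          = (-1:ℝ)^(n+1) * ((-1 : ℝ) ^ k * ((n+1).choose k : ℝ) * (k : ℝ) ^ n) := by
        intro k hk
        simp only [Finset.mem_Icc] at hk
        have h1 : ((-((n:ℝ)+1)) + ((n:ℝ)+1) - k) = -(k:ℝ) := by ring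
        have h2 : (-(k:ℝ)) ^ ((n+1) - k) = (-1:ℝ)^((n+1)-k) * (k:ℝ)^((n+1)-k) := by
          rw [neg_pow]
        have h3 : (k : ℝ) ^ (k - 1) * (k:ℝ)^((n+1)-k) = (k:ℝ)^n := by
          rw [← pow_add]; congr 1; omega
        have h5 : (-1:ℝ)^((n+1)-k) = (-1:ℝ)^(n+1) * (-1:ℝ)^k := by
          have h4 : (-1:ℝ)^((n+1)-k) * (-1:ℝ)^k = (-1:ℝ)^(n+1) := by
            rw [← pow_add]; congr 1; omega
          have hsq : ((-1:ℝ)^k) * ((-1:ℝ)^k) = 1 := by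
            rw [← pow_add]; exact Even.neg_one_pow ⟨k, rfl⟩
          calc (-1:ℝ)^((n+1)-k) = (-1:ℝ)^((n+1)-k) * (((-1:ℝ)^k) * ((-1:ℝ)^k)) := by rw [hsq, mul_one]
            _ = ((-1:ℝ)^((n+1)-k) * (-1:ℝ)^k) * (-1:ℝ)^k := by ring
            _ = (-1:ℝ)^(n+1) * (-1:ℝ)^k := by rw [h4]
        rw [h1, h2, h5]
        linear_combination ((-1:ℝ)^(n+1) * (-1:ℝ)^k * ((n+1).choose k : ℝ)) * h3
      rw [Finset.sum_congr rfl hterm, ← Finset.mul_sum]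
      have hrange : range (n+2) = insert 0 (Icc 1 (n+1)) := by
        ext a; simp [Finset.mem_range, Finset.mem_Icc]; omega
      have hfd := finite_diff_zero (n+1) n (by omega)
      rw [hrange, Finset.sum_insert (by simp)] at hfd
      have h00 : (-1:ℝ)^0 * (((n+1).choose 0 : ℕ) : ℝ) * ((0:ℕ):ℝ)^n = 0 := by
        simp [zero_pow (by omega : n ≠ 0)]
      rw [h00, zero_add] at hfd
      rw [hfd, mul_zero]
    have hFy : F y = 0 := hconst.trans hval
    have h2 : (∑ k ∈ Icc 1 (n + 1), ((n+1).choose k : ℝ) * (k : ℝ) ^ (k - 1)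
          * (y + ((n:ℝ)+1) - k) ^ ((n+1) - k)) - ((n:ℝ) + 1) * (y + ((n:ℝ)+1)) ^ n = 0 := hFy
    have h3 : (∑ k ∈ Icc 1 (n + 1), ((n+1).choose k : ℝ) * (k : ℝ) ^ (k - 1)
          * (y + ((n:ℝ)+1) - k) ^ ((n+1) - k)) = ((n:ℝ) + 1) * (y + ((n:ℝ)+1)) ^ n := by
      linarith
    push_cast
    exact h3


open Finset


/-- Key Cayley-type identity. -/
lemma abel_key (n : ℕ) (hn : 2 ≤ n) :
    ∑ k ∈ Icc 1 (n-1), ((n.choose k * k ^ k * (n-k) ^ (n-k-1) : ℕ) : ℝ)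
      = (((n-1) * n ^ (n-1) : ℕ) : ℝ) := by
  have h := abel_sum n 0
  -- rewrite base: 0 + n - k = ((n - k : ℕ) : ℝ)
  have hbase : ∀ k ∈ Icc 1 n, (n.choose k : ℝ) * (k : ℝ) ^ (k - 1) * ((0:ℝ) + n - k) ^ (n - k)
      = ((n.choose k * k ^ (k-1) * (n-k) ^ (n-k) : ℕ) : ℝ) := by
    intro k hk
    simp only [Finset.mem_Icc] at hk
    push_cast [Nat.cast_sub hk.2]
    ring
  rw [Finset.sum_congr rfl hbase] at h
  -- split off top term k = n
  have hsplit : Icc 1 n = Icc 1 ((n-1)+1) := by congr 1; omega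
  rw [hsplit, Finset.sum_Icc_succ_top (by omega : 1 ≤ (n-1)+1)] at h
  have htopidx : (n-1)+1 = n := by omega
  rw [htopidx] at h
  have htop : ((n.choose n * n ^ (n-1) * (n-n) ^ (n-n) : ℕ) : ℝ) = ((n:ℝ)) ^ (n-1) := by
    rw [Nat.choose_self, Nat.sub_self]
    push_cast
    ring
  rw [htop] at h
  -- h : ∑_{k ∈ Icc 1 (n-1)} cast(C(n,k) k^{k-1} (n-k)^{n-k}) + n^{n-1} = n (0+n)^{n-1}
  -- reindex k ↦ n - k
  have hrei : ∑ k ∈ Icc 1 (n-1), ((n.choose k * k ^ (k-1) * (n-k) ^ (n-k) : ℕ) : ℝ)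
      = ∑ k ∈ Icc 1 (n-1), ((n.choose k * k ^ k * (n-k) ^ (n-k-1) : ℕ) : ℝ) := by
    apply Finset.sum_nbij' (fun k => n - k) (fun k => n - k)
    · intro a ha; simp only [Finset.mem_Icc] at *; omega
    · intro a ha; simp only [Finset.mem_Icc] at *; omega
    · intro a ha; simp only [Finset.mem_Icc] at ha; omega
    · intro a ha; simp only [Finset.mem_Icc] at ha; omega
    · intro a ha
      simp only [Finset.mem_Icc] at ha
      congr 1
      have h1 : n.choose a = n.choose (n - a) := (Nat.choose_symm (by omega)).symm
      rw [← h1, show n - (n - a) = a from by omega]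
      ring
  rw [hrei] at h
  have hr2 : (n:ℝ) * ((0:ℝ) + n) ^ (n-1) = (((n-1) * n ^ (n-1) : ℕ):ℝ) + ((n:ℝ)) ^ (n-1) := by
    push_cast [Nat.cast_sub (by omega : 1 ≤ n)]
    ring
  rw [hr2] at h
  linarith


open Finset
open scoped Nat


/-- real coefficients of the tree function -/
noncomputable def br (k : ℕ) : ℝ := if k = 0 then 0 else (k : ℝ) ^ (k - 1) / (k ! : ℝ)

noncomputable def bb (k : ℕ) : ℂ := ((br k : ℝ) : ℂ)

lemma abel_key_nat (n : ℕ) (hn : 2 ≤ n) :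
    ∑ k ∈ Icc 1 (n-1), n.choose k * k ^ k * (n-k) ^ (n-k-1) = (n-1) * n ^ (n-1) := by
  have h := abel_key n hn
  rw [← Nat.cast_sum] at h
  exact_mod_cast h

lemma bb_zero : bb 0 = 0 := by simp [bb, br]

lemma bb_succ (k : ℕ) : bb (k+1) = ((k:ℂ)+1) ^ k / ((k+1)! : ℂ) := by
  simp only [bb, br, Nat.succ_ne_zero, if_false, Nat.add_sub_cancel]
  push_cast
  norm_num

lemma coeff_identity (n : ℕ) :
    (n:ℂ) * bb n = bb n + ∑ kl ∈ Finset.HasAntidiagonal.antidiagonal n, ((kl.1 : ℂ) * bb kl.1) * bb kl.2 := by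
  rw [Finset.Nat.sum_antidiagonal_eq_sum_range_succ_mk]
  match n with
  | 0 => simp [bb_zero]
  | 1 =>
    rw [Finset.sum_range_succ, Finset.sum_range_succ]
    simp [bb_zero]
  | (m + 2) =>
    set n := m + 2 with hn
    have hn2 : 2 ≤ n := by omega
    -- restrict the sum to Icc 1 (n-1)
    have hsub : Icc 1 (n-1) ⊆ range (n+1) := by
      intro a ha; simp only [Finset.mem_Icc] at ha; simp only [Finset.mem_range]; omega
    have hzero : ∀ k ∈ range (n+1), k ∉ Icc 1 (n-1) →
        ((k : ℂ) * bb k) * bb (n - k) = 0 := by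
      intro k hk hk2
      simp only [Finset.mem_range] at hk
      simp only [Finset.mem_Icc] at hk2
      have : k = 0 ∨ k = n := by omega
      rcases this with rfl | rfl
      · simp
      · rw [Nat.sub_self, bb_zero, mul_zero]
    rw [← Finset.sum_subset hsub hzero]
    -- per-term identity
    have hterm : ∀ k ∈ Icc 1 (n-1), ((k : ℂ) * bb k) * bb (n - k)
        = ((n.choose k * k ^ k * (n-k) ^ (n-k-1) : ℕ) : ℂ) / (n ! : ℂ) := by
      intro k hk
      simp only [Finset.mem_Icc] at hk
      obtain ⟨hk1, hk2⟩ := hk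
      have hkn : k ≤ n := by omega
      have hnk1 : 1 ≤ n - k := by omega
      have hbbk : bb k = (k:ℂ) ^ (k-1) / (k ! : ℂ) := by
        simp only [bb, br, if_neg (by omega : k ≠ 0)]; push_cast; ring
      have hbbnk : bb (n-k) = ((n-k : ℕ):ℂ) ^ (n-k-1) / ((n-k)! : ℂ) := by
        simp only [bb, br, if_neg (by omega : n - k ≠ 0)]; push_cast; ring
      rw [hbbk, hbbnk]
      have hfac : n.choose k * k ! * (n-k)! = n ! :=
        Nat.choose_mul_factorial_mul_factorial hkn
      have hfacC : ((n.choose k : ℕ) : ℂ) * ((k ! : ℕ) : ℂ) * (((n-k)! : ℕ) : ℂ) = ((n ! : ℕ) : ℂ) := by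
        rw [← hfac]; push_cast; ring
      have hk0 : ((k ! : ℕ) : ℂ) ≠ 0 := by exact_mod_cast (Nat.factorial_pos k).ne'
      have hnk0 : (((n-k)! : ℕ) : ℂ) ≠ 0 := by exact_mod_cast (Nat.factorial_pos (n-k)).ne'
      have hn0 : ((n ! : ℕ) : ℂ) ≠ 0 := by exact_mod_cast (Nat.factorial_pos n).ne'
      have hpow : (k:ℂ) * (k:ℂ) ^ (k-1) = (k:ℂ) ^ k := by
        rw [← pow_succ']; congr 1; omega
      push_cast [Nat.cast_sub hkn]
      field_simp
      linear_combination (((n:ℂ) - (k:ℂ)) ^ (n-k-1) * ((n ! : ℕ) : ℂ)) * hpow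
        - ((k:ℂ) ^ k * ((n:ℂ) - (k:ℂ)) ^ (n-k-1)) * hfacC
    rw [Finset.sum_congr rfl hterm, ← Finset.sum_div]
    have hsum : ∑ k ∈ Icc 1 (n-1), ((n.choose k * k ^ k * (n-k) ^ (n-k-1) : ℕ) : ℂ)
        = (((n-1) * n ^ (n-1) : ℕ) : ℂ) := by
      rw [← Nat.cast_sum, abel_key_nat n hn2]
    rw [hsum]
    have hbbn : bb n = (n:ℂ) ^ (n-1) / (n ! : ℂ) := by
      simp only [bb, br, if_neg (by omega : n ≠ 0)]; push_cast; ring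
    have hn0 : ((n ! : ℕ) : ℂ) ≠ 0 := by exact_mod_cast (Nat.factorial_pos n).ne'
    rw [hbbn]
    have hc : (((n-1) * n ^ (n-1) : ℕ) : ℂ) = ((n:ℂ) - 1) * (n:ℂ) ^ (n-1) := by
      push_cast [Nat.cast_sub (by omega : 1 ≤ n)]
      ring
    rw [hc]
    field_simp
    ring


open Finset Filter
open scoped Nat Topology




lemma pow_le_exp_factorial : ∀ k : ℕ, (k:ℝ)^k ≤ Real.exp 1 ^ k * (k ! : ℝ) := by
  intro k
  induction k with
  | zero => simp
  | succ k ih =>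
    have hstep : ((k:ℝ)+1)^k ≤ Real.exp 1 * (k:ℝ)^k := by
      rcases Nat.eq_zero_or_pos k with rfl | hk
      · simpa using Real.one_le_exp (by norm_num : (0:ℝ) ≤ 1)
      · have hk0 : (k:ℝ) ≠ 0 := by positivity
        have h1 : (1 + 1/(k:ℝ)) ≤ Real.exp (1/(k:ℝ)) := by
          have := Real.add_one_le_exp (1/(k:ℝ)); linarith
        have h2 : (1 + 1/(k:ℝ))^k ≤ Real.exp (1/(k:ℝ))^k := by
          apply pow_le_pow_left₀ (by positivity) h1
        have h3 : Real.exp (1/(k:ℝ))^k = Real.exp 1 := by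
          rw [← Real.exp_nat_mul]
          congr 1
          field_simp
        have h4 : ((k:ℝ)+1)^k = (k:ℝ)^k * (1 + 1/(k:ℝ))^k := by
          rw [← mul_pow]
          congr 1
          field_simp
        rw [h4, ← h3]
        calc (k:ℝ)^k * (1 + 1/(k:ℝ))^k ≤ (k:ℝ)^k * Real.exp (1/(k:ℝ))^k :=
              mul_le_mul_of_nonneg_left h2 (by positivity)
          _ = Real.exp (1/(k:ℝ))^k * (k:ℝ)^k := by ring
    push_cast
    calc ((k:ℝ)+1)^(k+1) = (((k:ℝ)+1)) * ((k:ℝ)+1)^k := by rw [pow_succ]; ring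
      _ ≤ ((k:ℝ)+1) * (Real.exp 1 * (k:ℝ)^k) := by
          apply mul_le_mul_of_nonneg_left hstep (by positivity)
      _ ≤ ((k:ℝ)+1) * (Real.exp 1 * (Real.exp 1 ^ k * (k ! : ℝ))) := by
          apply mul_le_mul_of_nonneg_left (mul_le_mul_of_nonneg_left ih (Real.exp_pos 1).le) (by positivity)
      _ = Real.exp 1 ^ (k+1) * ((((k+1) * k ! : ℕ)) : ℝ) := by push_cast; ring
      _ = Real.exp 1 ^ (k+1) * (((k+1)! : ℕ) : ℝ) := by rw [Nat.factorial_succ]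
      _ = Real.exp 1 ^ (k+1) * ((k+1)! : ℝ) := by push_cast; ring

lemma br_nonneg (k : ℕ) : 0 ≤ br k := by
  unfold br; split
  · exact le_refl 0
  · positivity

lemma mul_br_le (k : ℕ) : (k:ℝ) * br k ≤ Real.exp 1 ^ k := by
  unfold br
  rcases Nat.eq_zero_or_pos k with rfl | hk
  · simp
  · rw [if_neg (by omega)]
    have hfac : (0:ℝ) < (k ! : ℝ) := by exact_mod_cast Nat.factorial_pos k
    rw [mul_div_assoc'] -- k * (k^(k-1)/k!) = (k * k^(k-1))/k!
    rw [div_le_iff₀ hfac]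
    have hpow : (k:ℝ) * (k:ℝ)^(k-1) = (k:ℝ)^k := by
      rw [← pow_succ']; congr 1; omega
    rw [hpow]
    exact pow_le_exp_factorial k

lemma br_le (k : ℕ) : br k ≤ Real.exp 1 ^ k := by
  rcases Nat.eq_zero_or_pos k with rfl | hk
  · simp [br]
  · calc br k = 1 * br k := by ring
      _ ≤ (k:ℝ) * br k := by
          apply mul_le_mul_of_nonneg_right _ (br_nonneg k)
          exact_mod_cast hk
      _ ≤ Real.exp 1 ^ k := mul_br_le k

lemma bb_norm (k : ℕ) : ‖bb k‖ = br k := by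
  rw [bb, Complex.norm_real, Real.norm_eq_abs, abs_of_nonneg (br_nonneg k)]


open Finset Filter Metric
open scoped Nat Topology



noncomputable def Tf (z : ℂ) : ℂ := ∑' k : ℕ, bb k * z ^ k
noncomputable def Sf (z : ℂ) : ℂ := ∑' k : ℕ, (k : ℂ) * bb k * z ^ k
noncomputable def Df (z : ℂ) : ℂ := ∑' k : ℕ, (k : ℂ) * bb k * z ^ (k - 1)

lemma exp_mul_lt_one {a : ℝ} (ha : 0 ≤ a) (h : a < (Real.exp 1)⁻¹) : Real.exp 1 * a < 1 := by
  have he : (0:ℝ) < Real.exp 1 := Real.exp_pos 1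
  calc Real.exp 1 * a < Real.exp 1 * (Real.exp 1)⁻¹ := by
        exact mul_lt_mul_of_pos_left h he
    _ = 1 := mul_inv_cancel₀ he.ne'

lemma summable_norm_T {z : ℂ} (hz : ‖z‖ < (Real.exp 1)⁻¹) :
    Summable (fun k : ℕ => ‖bb k * z ^ k‖) := by
  apply Summable.of_nonneg_of_le (fun k => norm_nonneg _)
    (fun k => ?_) (summable_geometric_of_lt_one (by positivity)
      (exp_mul_lt_one (norm_nonneg z) hz))
  rw [norm_mul, norm_pow, bb_norm, mul_pow]
  exact mul_le_mul (br_le k) (pow_le_pow_left₀ (norm_nonneg z) (le_refl _) k)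
    (by positivity) (by positivity)

lemma summable_norm_S {z : ℂ} (hz : ‖z‖ < (Real.exp 1)⁻¹) :
    Summable (fun k : ℕ => ‖(k : ℂ) * bb k * z ^ k‖) := by
  apply Summable.of_nonneg_of_le (fun k => norm_nonneg _)
    (fun k => ?_) (summable_geometric_of_lt_one (by positivity)
      (exp_mul_lt_one (norm_nonneg z) hz))
  rw [norm_mul, norm_mul, norm_pow, bb_norm, mul_pow, Complex.norm_natCast]
  exact mul_le_mul (mul_br_le k) (pow_le_pow_left₀ (norm_nonneg z) (le_refl _) k)
    (by positivity) (by positivity)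

lemma cauchy_ST {z : ℂ} (hz : ‖z‖ < (Real.exp 1)⁻¹) :
    Sf z * (1 - Tf z) = Tf z := by
  have hS := summable_norm_S hz
  have hT := summable_norm_T hz
  have hprod : Sf z * Tf z = ∑' n : ℕ,
      ∑ kl ∈ Finset.HasAntidiagonal.antidiagonal n, ((kl.1 : ℂ) * bb kl.1 * z ^ kl.1) * (bb kl.2 * z ^ kl.2) :=
    tsum_mul_tsum_eq_tsum_sum_antidiagonal_of_summable_norm hS hT
  have hterm : ∀ n : ℕ, ∑ kl ∈ Finset.HasAntidiagonal.antidiagonal n,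
      ((kl.1 : ℂ) * bb kl.1 * z ^ kl.1) * (bb kl.2 * z ^ kl.2)
      = ((n:ℂ) * bb n - bb n) * z ^ n := by
    intro n
    have h1 : ∀ kl ∈ Finset.HasAntidiagonal.antidiagonal n,
        ((kl.1 : ℂ) * bb kl.1 * z ^ kl.1) * (bb kl.2 * z ^ kl.2)
        = (((kl.1 : ℂ) * bb kl.1) * bb kl.2) * z ^ n := by
      intro kl hkl
      rw [Finset.HasAntidiagonal.mem_antidiagonal] at hkl
      rw [← hkl, pow_add]
      ring
    rw [Finset.sum_congr rfl h1, ← Finset.sum_mul]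
    congr 1
    linear_combination -coeff_identity n
  have hprod2 : Sf z * Tf z = ∑' n : ℕ, ((n:ℂ) * bb n - bb n) * z ^ n := by
    rw [hprod]; exact tsum_congr hterm
  have hsplit : ∑' n : ℕ, ((n:ℂ) * bb n - bb n) * z ^ n = Sf z - Tf z := by
    have h1 : (fun n : ℕ => ((n:ℂ) * bb n - bb n) * z ^ n)
        = fun n : ℕ => ((n:ℂ) * bb n * z ^ n) - (bb n * z ^ n) := funext fun n => by ring
    rw [h1, Summable.tsum_sub hS.of_norm hT.of_norm]
    rfl
  rw [hsplit] at hprod2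
  linear_combination -hprod2

lemma z_mul_Df (z : ℂ) : z * Df z = Sf z := by
  rw [Df, ← tsum_mul_left, Sf]
  apply tsum_congr
  intro k
  match k with
  | 0 => simp
  | (m+1) =>
    simp only [Nat.add_sub_cancel]
    rw [pow_succ]
    ring

lemma Tf_zero : Tf 0 = 0 := by
  rw [Tf]
  have h : ∀ k : ℕ, bb k * (0:ℂ) ^ k = 0 := by
    intro k
    match k with
    | 0 => simp [bb, br]
    | (m+1) => simp
  rw [tsum_congr h, tsum_zero]

lemma Df_zero : Df 0 = 1 := by
  rw [Df, tsum_eq_single 1]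
  · norm_num [bb, br]
  · intro k hk
    match k with
    | 0 => simp
    | (m+2) => simp

lemma Tf_hasDeriv {r : ℝ} (hr0 : 0 < r) (hre : r < (Real.exp 1)⁻¹) {z : ℂ}
    (hz : z ∈ Metric.ball (0:ℂ) r) : HasDerivAt Tf (Df z) z := by
  have hgeo : Summable (fun k : ℕ => (Real.exp 1 * r)^k / r) :=
    (summable_geometric_of_lt_one (by positivity) (exp_mul_lt_one hr0.le hre)).div_const r
  have h := hasDerivAt_tsum_of_isPreconnected hgeo isOpen_ball
    (convex_ball (0:ℂ) r).isPreconnected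
    (g := fun k z => bb k * z ^ k) (g' := fun k z => (k:ℂ) * bb k * z ^ (k-1))
    ?_ ?_ (mem_ball_self hr0) ?_ hz
  · exact h
  · intro k y _
    have h1 := (hasDerivAt_pow k y).const_mul (bb k)
    refine h1.congr_deriv ?_
    show _ = (k:ℂ) * bb k * y ^ (k-1)
    ring
  · intro k y hy
    have hyr : ‖y‖ ≤ r := (mem_ball_zero_iff.mp hy).le
    have hnorm : ‖(k:ℂ) * bb k * y ^ (k-1)‖ = ((k:ℝ) * br k) * ‖y‖^(k-1) := by
      rw [norm_mul, norm_mul, norm_pow, bb_norm, Complex.norm_natCast]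
    rw [hnorm]
    have hle : ((k:ℝ) * br k) * ‖y‖^(k-1) ≤ Real.exp 1 ^ k * r ^ (k-1) := by
      apply mul_le_mul (mul_br_le k) (pow_le_pow_left₀ (norm_nonneg y) hyr _)
        (by positivity) (by positivity)
    refine hle.trans ?_
    match k with
    | 0 =>
      simp only [pow_zero, Nat.zero_sub, one_mul, mul_pow, pow_zero, one_div]
      have he1 : (1:ℝ) ≤ Real.exp 1 := Real.one_le_exp (by norm_num)
      have hr1 : r ≤ 1 := by
        refine hre.le.trans ?_
        nlinarith [mul_inv_cancel₀ (Real.exp_pos 1).ne', (inv_pos.mpr (Real.exp_pos 1)).le]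
      nlinarith [mul_inv_cancel₀ hr0.ne', (inv_pos.mpr hr0).le]
    | (m+1) =>
      simp only [Nat.add_sub_cancel]
      have hdiv : (Real.exp 1 * r)^(m+1) / r = Real.exp 1 ^ (m+1) * r ^ m := by
        rw [mul_pow, mul_div_assoc]
        congr 1
        rw [pow_succ, mul_div_assoc, div_self hr0.ne', mul_one]
      rw [hdiv]
  · have h : ∀ k : ℕ, bb k * (0:ℂ) ^ k = 0 := by
      intro k
      match k with
      | 0 => simp [bb, br]
      | (m+1) => simp
    exact (summable_congr h).mpr summable_zero

lemma tree_eq {x : ℂ} (hx : ‖x‖ < (Real.exp 1)⁻¹) :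
    Tf x * Complex.exp (-Tf x) = x := by
  set r : ℝ := (‖x‖ + (Real.exp 1)⁻¹)/2 with hrdef
  have hinv : 0 < (Real.exp 1)⁻¹ := by positivity
  have hxr : ‖x‖ < r := by rw [hrdef]; linarith
  have hr0 : 0 < r := by rw [hrdef]; linarith [norm_nonneg x]
  have hre : r < (Real.exp 1)⁻¹ := by rw [hrdef]; linarith
  have hball : ∀ z ∈ Metric.ball (0:ℂ) r, ‖z‖ < (Real.exp 1)⁻¹ :=
    fun z hz => lt_trans (mem_ball_zero_iff.mp hz) hre
  set F : ℂ → ℂ := fun z => Tf z * Complex.exp (-Tf z) - z with hF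
  have hFd : ∀ z ∈ Metric.ball (0:ℂ) r,
      HasDerivAt F (Df z * (1 - Tf z) * Complex.exp (-Tf z) - 1) z := by
    intro z hz
    have h1 : HasDerivAt Tf (Df z) z := Tf_hasDeriv hr0 hre hz
    have h2 : HasDerivAt (fun w => Complex.exp (-Tf w)) (Complex.exp (-Tf z) * (-Df z)) z :=
      h1.neg.cexp
    have h4 := (h1.mul h2).sub (hasDerivAt_id z)
    exact h4.congr_deriv (by ring)
  have hF0 : F 0 = 0 := by simp only [hF, Tf_zero]; simp
  have hd0 : HasDerivAt F 0 0 := by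
    have h := hFd 0 (mem_ball_self hr0)
    rw [Tf_zero, Df_zero] at h
    simpa using h
  -- the slope of F at 0 tends to 0
  have hslope : Filter.Tendsto (fun z : ℂ => F z / z) (nhdsWithin 0 {(0:ℂ)}ᶜ) (nhds 0) := by
    have h := hasDerivAt_iff_tendsto_slope.mp hd0
    apply h.congr'
    filter_upwards [self_mem_nhdsWithin] with z hz
    rw [slope_def_field, hF0]
    simp
  -- F vanishes on the real segment (0, r)
  have hreal : ∀ b : ℝ, 0 < b → b < r → F ↑b = 0 := by
    intro b hb0 hbr
    have hkey : ∀ s : ℝ, 0 < s → s ≤ b → HasDerivAt (fun u : ℝ => F ↑u / ↑u) 0 s := by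
      intro s hs0 hsb
      have hsball : (↑s : ℂ) ∈ Metric.ball (0:ℂ) r := by
        rw [mem_ball_zero_iff, Complex.norm_real, Real.norm_eq_abs, abs_of_pos hs0]
        linarith
      have hsne : (↑s : ℂ) ≠ 0 := by
        simpa using hs0.ne'
      have h1 : HasDerivAt (fun u : ℝ => F ↑u)
          (Df ↑s * (1 - Tf ↑s) * Complex.exp (-Tf ↑s) - 1) s :=
        (hFd ↑s hsball).comp_ofReal
      have h2 : HasDerivAt (fun u : ℝ => (↑u : ℂ)) 1 s := by
        simpa using (hasDerivAt_id s).ofReal_comp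
      have h3 := h1.div h2 hsne
      have hder : Df ↑s * (1 - Tf ↑s) * Complex.exp (-Tf ↑s) - 1 = F ↑s / ↑s := by
        have hzD : (↑s : ℂ) * Df ↑s = Sf ↑s := z_mul_Df ↑s
        have hcz : Sf ↑s * (1 - Tf ↑s) = Tf ↑s := cauchy_ST (hball _ hsball)
        simp only [hF]
        rw [eq_div_iff hsne]
        linear_combination Complex.exp (-Tf ↑s) * ((1 - Tf ↑s) * hzD + hcz)
      have hzero : (F ↑s / ↑s * ↑s - F ↑s * 1) / ((↑s:ℂ))^2 = 0 := by
        rw [div_eq_zero_iff]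
        left
        rw [div_mul_cancel₀ _ hsne]
        ring
      rw [hder] at h3
      rw [hzero] at h3
      exact h3
    have hconst : ∀ a : ℝ, 0 < a → a ≤ b → F ↑b / ↑b = F ↑a / ↑a := by
      intro a ha0 hab
      have hcont : ContinuousOn (fun u : ℝ => F ↑u / ↑u) (Set.Icc a b) := by
        intro s hs
        exact ((hkey s (lt_of_lt_of_le ha0 hs.1) hs.2).differentiableAt.continuousAt).continuousWithinAt
      have h := constant_of_has_deriv_right_zero hcont
        (fun s hs => ((hkey s (lt_of_lt_of_le ha0 hs.1) hs.2.le).hasDerivWithinAt))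
      exact h b (Set.right_mem_Icc.mpr hab)
    have hmapr : Filter.Tendsto (fun a : ℝ => (↑a : ℂ)) (nhdsWithin 0 (Set.Ioi (0:ℝ)))
        (nhdsWithin 0 {(0:ℂ)}ᶜ) := by
      rw [tendsto_nhdsWithin_iff]
      constructor
      · exact (Complex.continuous_ofReal.tendsto' 0 0 rfl).mono_left nhdsWithin_le_nhds
      · filter_upwards [self_mem_nhdsWithin] with a ha
        simp only [Set.mem_compl_iff, Set.mem_singleton_iff]
        exact Complex.ofReal_ne_zero.mpr (ne_of_gt ha)
    have hlim : Filter.Tendsto (fun a : ℝ => F ↑a / ↑a) (nhdsWithin 0 (Set.Ioi (0:ℝ))) (nhds 0) :=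
      hslope.comp hmapr
    have hlim2 : Filter.Tendsto (fun _ : ℝ => F ↑b / ↑b) (nhdsWithin 0 (Set.Ioi (0:ℝ))) (nhds 0) := by
      apply hlim.congr'
      filter_upwards [Ioo_mem_nhdsGT_of_mem (Set.left_mem_Ico.mpr hb0)] with a ha
      exact (hconst a ha.1 ha.2.le).symm
    have hval : F ↑b / ↑b = (0:ℂ) := tendsto_nhds_unique tendsto_const_nhds hlim2
    have hbne : (↑b : ℂ) ≠ 0 := Complex.ofReal_ne_zero.mpr hb0.ne'
    rcases div_eq_zero_iff.mp hval with h | h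
    · exact h
    · exact absurd h hbne
  -- analytic continuation
  have hanal : AnalyticOnNhd ℂ F (Metric.ball 0 r) :=
    DifferentiableOn.analyticOnNhd
      (fun z hz => ((hFd z hz).differentiableAt.differentiableWithinAt)) isOpen_ball
  have hfreq : ∃ᶠ z in nhdsWithin 0 {(0:ℂ)}ᶜ, F z = 0 := by
    have hr2 : Filter.Tendsto (fun n : ℕ => r / ((n:ℝ)+2)) Filter.atTop (nhds 0) := by
      have h1 : Filter.Tendsto (fun n : ℕ => r / ((n:ℝ))) Filter.atTop (nhds 0) :=
        tendsto_const_div_atTop_nhds_zero_nat r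
      have h2 := h1.comp (tendsto_add_atTop_nat 2)
      refine h2.congr fun n => ?_
      simp only [Function.comp]
      push_cast
      ring_nf
    have hseq : Filter.Tendsto (fun n : ℕ => (↑(r / ((n:ℝ)+2)) : ℂ)) Filter.atTop
        (nhdsWithin 0 {(0:ℂ)}ᶜ) := by
      rw [tendsto_nhdsWithin_iff]
      constructor
      · exact (Complex.continuous_ofReal.tendsto' 0 0 rfl).comp hr2
      · apply Filter.Eventually.of_forall
        intro n
        have hpos : 0 < r/((n:ℝ)+2) := by positivity
        simp only [Set.mem_compl_iff, Set.mem_singleton_iff]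
        exact Complex.ofReal_ne_zero.mpr hpos.ne'
    apply hseq.frequently
    apply Filter.Frequently.of_forall
    intro n
    apply hreal
    · positivity
    · refine div_lt_self hr0 ?_
      have := Nat.cast_nonneg (α := ℝ) n
      linarith
  have hFx : F x = 0 := hanal.eqOn_zero_of_preconnected_of_frequently_eq_zero
    (convex_ball (0:ℂ) r).isPreconnected (mem_ball_self hr0) hfreq (mem_ball_zero_iff.mpr hxr)
  simp only [hF] at hFx
  linear_combination hFx

/-- For `|x| < 1/e`, let `t = t(x) = 1 + Σ_{k≥1} (k^k/k!) x^k` (with `Re(t) > 1`).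
Then `w(t) := -1/t - log(1 - 1/t)` satisfies `e^{-(w+1)} = x`; equivalently
`w(t) = Σ_{m≥2} t^{-m}/m` and `e^{-(w+1)} = (1 - 1/t)e^{-(1 - 1/t)}`. -/
theorem laplace_variable_on_lambert_curve (x t w : ℂ)
    (hx : ‖x‖ < (Real.exp 1)⁻¹)
    (htdef : t = 1 + ∑' k : ℕ, ((k + 1 : ℂ)) ^ (k + 1) / ((k + 1)! : ℂ) * x ^ (k + 1))
    (ht : 1 < t.re)
    (hwdef : w = -1 / t - Complex.log (1 - 1 / t)) :
    Complex.exp (-(w + 1)) = x ∧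
    w = ∑' m : ℕ, ((m : ℂ) + 2)⁻¹ * t ^ (-((m : ℤ) + 2)) ∧
    Complex.exp (-(w + 1)) = (1 - 1 / t) * Complex.exp (-(1 - 1 / t)) := by
  have ht0 : t ≠ 0 := by
    intro h
    rw [h] at ht
    simp at ht
    linarith
  have h1t : (1:ℂ) - 1/t ≠ 0 := by
    intro h
    have h2 : (1:ℂ)/t = 1 := by linear_combination -h
    have h3 : t = 1 := by
      field_simp at h2
      exact h2.symm
    rw [h3] at ht
    simp at ht
  -- part 3
  have hpart3 : Complex.exp (-(w + 1)) = (1 - 1/t) * Complex.exp (-(1 - 1/t)) := by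
    have harg : -(w + 1) = Complex.log (1 - 1/t) + (-(1 - 1/t)) := by
      rw [hwdef]; ring
    rw [harg, Complex.exp_add, Complex.exp_log h1t]
  -- identify t with 1 + Sf x
  have hsum : Summable (fun k : ℕ => (k:ℂ) * bb k * x ^ k) := (summable_norm_S hx).of_norm
  have hSx : t = 1 + Sf x := by
    rw [htdef]
    congr 1
    rw [Sf, hsum.tsum_eq_zero_add]
    have h0 : ((0:ℕ):ℂ) * bb 0 * x ^ 0 = 0 := by simp
    rw [h0, zero_add]
    apply tsum_congr
    intro k
    rw [bb_succ k]
    have : (((k+1:ℕ)):ℂ) = (k:ℂ) + 1 := by push_cast; ring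
    rw [this, pow_succ]
    ring
  have hSfval : Sf x = t - 1 := by rw [hSx]; ring
  -- identify 1 - 1/t with Tf x
  have hTf : 1 - 1/t = Tf x := by
    have hce : Sf x * (1 - Tf x) = Tf x := cauchy_ST hx
    rw [hSfval] at hce
    field_simp
    linear_combination hce
  -- part 1
  have hpart1 : Complex.exp (-(w + 1)) = x := by
    rw [hpart3, hTf]
    exact tree_eq hx
  refine ⟨hpart1, ?_, hpart3⟩
  -- part 2 : the log series
  have htnorm : 1 < ‖t‖ := by
    have h1 : t.re ≤ |t.re| := le_abs_self _
    have h2 : |t.re| ≤ ‖t‖ := Complex.abs_re_le_norm t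
    linarith
  have hz1 : ‖(1:ℂ)/t‖ < 1 := by
    rw [norm_div, norm_one, div_lt_one (by linarith : (0:ℝ) < ‖t‖)]
    exact htnorm
  have hlog := Complex.hasSum_taylorSeries_neg_log hz1
  have hrange : ∑ i ∈ Finset.range 2, ((1:ℂ)/t) ^ i / (i:ℂ) = 1/t := by
    rw [Finset.sum_range_succ, Finset.sum_range_one]
    norm_num
  have h3 : HasSum (fun n : ℕ => ((1:ℂ)/t) ^ (n+2) / ((n+2 : ℕ):ℂ)) w := by
    refine (hasSum_nat_add_iff (f := fun n : ℕ => ((1:ℂ)/t) ^ n / (n:ℂ)) 2).mpr ?_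
    rw [hrange]
    have hwval : w + 1/t = -Complex.log (1 - 1/t) := by rw [hwdef]; ring
    rw [hwval]
    exact hlog
  rw [← h3.tsum_eq]
  apply tsum_congr
  intro n
  have hzp : t ^ (-((n:ℤ)+2)) = ((1:ℂ)/t)^(n+2) := by
    rw [zpow_neg, show ((n:ℤ)+2) = ((n+2 : ℕ) : ℤ) by push_cast; ring, zpow_natCast,
      one_div, inv_pow]
  rw [hzp, div_eq_mul_inv]
  push_cast
  ring
end

section
/- Let w(t) = -1/t - log(1 - 1/t) = Σ_{m≥2} t^{-m}/m as a formal power series in 1/t. Then the functional equation w(s) = w(t) has exactly one formal solution s(t) ≠ t in descending powers of t, and it begins s(t) = -t + 2/3 + (4/135) t^{-2} + (8/405) t^{-3} + O(t^{-4}); moreover s is an involution: s(s(t)) = t. -/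
open PowerSeries

/-- For a formal power series `B` with zero constant term, `wSeries B` is the formal
composition `w(B) = Σ_{m≥2} B^m / m`, i.e. the result of substituting `B` for `u = 1/t`
in `w(t) = -1/t - log(1 - 1/t) = Σ_{m≥2} u^m/m`.  (Only `m ≤ n` contribute to the
`n`-th coefficient since `B` has positive order.) -/
noncomputable def wSeries (B : PowerSeries ℚ) : PowerSeries ℚ :=
  PowerSeries.mk fun n => ∑ m ∈ Finset.Icc 2 n, (m : ℚ)⁻¹ * coeff n (B ^ m)

/-- Formal composition `A ∘ B` of power series (meaningful when `B` has zero
constant term). -/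
noncomputable def psComp (A B : PowerSeries ℚ) : PowerSeries ℚ :=
  PowerSeries.mk fun n => ∑ m ∈ Finset.range (n + 1), coeff m A * coeff n (B ^ m)

/- ## Auxiliary lemmas -/

private lemma coeff_pow_eq_zero {P : PowerSeries ℚ} (hP : constantCoeff P = 0) :
    ∀ m n : ℕ, n < m → coeff n (P ^ m) = 0 := by
  intro m
  induction m with
  | zero => intro n h; omega
  | succ m ih =>
    intro n h
    rw [pow_succ', coeff_mul]
    apply Finset.sum_eq_zero
    rintro ⟨i, j⟩ hij
    rw [Finset.HasAntidiagonal.mem_antidiagonal] at hij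
    rcases Nat.eq_zero_or_pos i with hi | hi
    · subst hi
      simp only [coeff_zero_eq_constantCoeff, hP, zero_mul]
    · rw [ih j (by omega), mul_zero]

private lemma coeff_pow_congr {P Q : PowerSeries ℚ} (hP : constantCoeff P = 0)
    (hQ : constantCoeff Q = 0) {N : ℕ}
    (hag : ∀ k ≤ N, coeff k P = coeff k Q) :
    ∀ m n : ℕ, n < N + m → coeff n (P ^ m) = coeff n (Q ^ m) := by
  intro m
  induction m with
  | zero => intro n h; rfl
  | succ m ih =>
    intro n h
    rw [pow_succ', pow_succ', coeff_mul, coeff_mul]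
    apply Finset.sum_congr rfl
    rintro ⟨i, j⟩ hij
    rw [Finset.HasAntidiagonal.mem_antidiagonal] at hij
    rcases Nat.eq_zero_or_pos i with hi | hi
    · subst hi
      simp only [coeff_zero_eq_constantCoeff, hP, hQ, zero_mul]
    · by_cases hiN : i ≤ N
      · rw [hag i hiN, ih j (by omega)]
      · rw [coeff_pow_eq_zero hP m j (by omega), coeff_pow_eq_zero hQ m j (by omega),
          mul_zero, mul_zero]

private lemma sq_step {P Q : PowerSeries ℚ} (hP : constantCoeff P = 0)
    (hQ : constantCoeff Q = 0) {n : ℕ} (hn : 2 ≤ n)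
    (hag : ∀ k < n, coeff k P = coeff k Q) :
    coeff (n+1) (P ^ 2) = coeff (n+1) (Q ^ 2)
      + 2 * coeff 1 P * (coeff n P - coeff n Q) := by
  have hQ1 : coeff 1 Q = coeff 1 P := (hag 1 (by omega)).symm
  rw [pow_two, pow_two, coeff_mul, coeff_mul,
    Finset.Nat.sum_antidiagonal_eq_sum_range_succ_mk,
    Finset.Nat.sum_antidiagonal_eq_sum_range_succ_mk]
  have step : ∀ i ∈ Finset.range (n+2),
      coeff i P * coeff (n+1-i) P
        = coeff i Q * coeff (n+1-i) Q
          + ((if i = 1 then coeff 1 P * (coeff n P - coeff n Q) else 0)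
             + (if i = n then coeff 1 P * (coeff n P - coeff n Q) else 0)) := by
    intro i hi
    rw [Finset.mem_range] at hi
    by_cases h1 : i = 1
    · subst h1
      rw [if_pos rfl, if_neg (by omega : ¬(1 = n)), (by omega : n + 1 - 1 = n), hQ1]
      ring
    · by_cases h2 : i = n
      · rw [h2, if_neg (by omega : ¬(n = 1)), if_pos rfl, (by omega : n + 1 - n = 1), hQ1]
        ring
      · rw [if_neg h1, if_neg h2, add_zero, add_zero]
        rcases Nat.eq_zero_or_pos i with h0 | h0
        · subst h0
          simp only [coeff_zero_eq_constantCoeff, hP, hQ, zero_mul]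
        · by_cases htop : i = n + 1
          · subst htop
            simp only [Nat.sub_self, coeff_zero_eq_constantCoeff, hP, hQ, mul_zero]
          · rw [hag i (by omega), hag (n+1-i) (by omega)]
  rw [Finset.sum_congr rfl step, Finset.sum_add_distrib, Finset.sum_add_distrib,
    Finset.sum_ite_eq' (Finset.range (n+2)) 1
      (fun _ => coeff 1 P * (coeff n P - coeff n Q)),
    Finset.sum_ite_eq' (Finset.range (n+2)) n
      (fun _ => coeff 1 P * (coeff n P - coeff n Q)),
    if_pos (Finset.mem_range.mpr (by omega)), if_pos (Finset.mem_range.mpr (by omega))]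
  ring

private lemma wstep {P Q : PowerSeries ℚ} (hP : constantCoeff P = 0)
    (hQ : constantCoeff Q = 0) {n : ℕ} (hn : 2 ≤ n)
    (hag : ∀ k < n, coeff k P = coeff k Q) :
    coeff (n+1) (wSeries P)
      = coeff (n+1) (wSeries Q) + coeff 1 P * (coeff n P - coeff n Q) := by
  rw [wSeries, wSeries, coeff_mk, coeff_mk]
  have key : ∑ m ∈ Finset.Icc 2 (n+1),
      ((m:ℚ)⁻¹ * coeff (n+1) (P ^ m) - (m:ℚ)⁻¹ * coeff (n+1) (Q ^ m))
      = coeff 1 P * (coeff n P - coeff n Q) := by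
    rw [Finset.sum_eq_single 2]
    · rw [sq_step hP hQ hn hag]
      norm_num
      ring
    · intro m hm hne
      rw [Finset.mem_Icc] at hm
      have : coeff (n+1) (P ^ m) = coeff (n+1) (Q ^ m) :=
        coeff_pow_congr (N := n - 1) hP hQ (fun k hk => hag k (by omega)) m (n+1) (by omega)
      rw [this]; ring
    · intro h
      exact absurd (Finset.mem_Icc.mpr ⟨le_refl 2, by omega⟩) h
  have := Finset.sum_sub_distrib (s := Finset.Icc 2 (n+1))
    (f := fun m => (m:ℚ)⁻¹ * coeff (n+1) (P ^ m))
    (g := fun m => (m:ℚ)⁻¹ * coeff (n+1) (Q ^ m))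
  rw [this] at key
  linarith

private lemma coeff_wSeries_X (n : ℕ) :
    coeff n (wSeries X) = if 2 ≤ n then (n : ℚ)⁻¹ else 0 := by
  rw [wSeries, coeff_mk]
  have h : ∀ m ∈ Finset.Icc 2 n,
      (m:ℚ)⁻¹ * coeff n ((X : PowerSeries ℚ) ^ m)
        = if m = n then (n:ℚ)⁻¹ else 0 := by
    intro m hm
    rw [coeff_X_pow]
    by_cases h : m = n
    · subst h; simp
    · rw [if_neg (fun hh => h hh.symm), if_neg h, mul_zero]
  rw [Finset.sum_congr rfl h, Finset.sum_ite_eq' (Finset.Icc 2 n) n (fun _ => (n:ℚ)⁻¹)]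
  by_cases h2 : 2 ≤ n
  · rw [if_pos (Finset.mem_Icc.mpr ⟨h2, le_refl n⟩), if_pos h2]
  · rw [if_neg (fun hh => h2 (Finset.mem_Icc.mp hh).1), if_neg h2]

private lemma w_unique {P Q : PowerSeries ℚ} (hP : constantCoeff P = 0)
    (hQ : constantCoeff Q = 0) (h1 : coeff 1 P = coeff 1 Q)
    (h1ne : coeff 1 P ≠ 0) (hw : wSeries P = wSeries Q) : P = Q := by
  ext n
  induction n using Nat.strong_induction_on with
  | _ n ih =>
    rcases n with _ | (_ | k)
    · simp only [coeff_zero_eq_constantCoeff, hP, hQ]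
    · exact h1
    · have hag : ∀ j < k + 2, coeff j P = coeff j Q := fun j hj => ih j hj
      have e2 := wstep hP hQ (n := k+2) (by omega) hag
      have e : coeff (k+2+1) (wSeries P) = coeff (k+2+1) (wSeries Q) := by rw [hw]
      have hz : coeff 1 P * (coeff (k+2) P - coeff (k+2) Q) = 0 := by
        rw [e2] at e; linarith
      rcases mul_eq_zero.mp hz with h | h
      · exact absurd h h1ne
      · linarith [sub_eq_zero.mp h]

/- ## The deck transformation series -/

noncomputable def bc : ℕ → ℚ
  | 0 => 0
  | 1 => -1
  | n + 2 =>
    (∑ m ∈ Finset.Icc 2 (n+3), (m : ℚ)⁻¹ *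
        coeff (n+3) ((PowerSeries.mk fun k => if _ : k < n + 2 then bc k else 0) ^ m))
      - ((n : ℚ) + 3)⁻¹
  termination_by n => n

@[simp] private lemma bc0 : bc 0 = 0 := by rw [bc]
@[simp] private lemma bc1 : bc 1 = -1 := by rw [bc]

noncomputable def Bser : PowerSeries ℚ := PowerSeries.mk bc
noncomputable def trB (n : ℕ) : PowerSeries ℚ :=
  PowerSeries.mk fun k => if k < n then bc k else 0

noncomputable def User : PowerSeries ℚ := PowerSeries.mk fun k => bc (k+1)

private lemma coeff_User (k : ℕ) : coeff k User = bc (k+1) := by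
  rw [User, coeff_mk]

private lemma constantCoeff_User : constantCoeff User = -1 := by
  rw [← coeff_zero_eq_constantCoeff, coeff_User, bc1]

private lemma bc_rec (n : ℕ) :
    bc (n+2) = coeff (n+3) (wSeries (trB (n+2))) - ((n : ℚ) + 3)⁻¹ := by
  have h : (PowerSeries.mk fun k => if _ : k < n + 2 then bc k else 0) = trB (n+2) := by
    simp only [trB, dite_eq_ite]
  rw [bc, h, wSeries, coeff_mk]

private lemma constantCoeff_Bser : constantCoeff Bser = 0 := by
  rw [Bser, ← coeff_zero_eq_constantCoeff, coeff_mk, bc0]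

private lemma constantCoeff_trB (n : ℕ) : constantCoeff (trB n) = 0 := by
  rw [trB, ← coeff_zero_eq_constantCoeff, coeff_mk]
  split <;> simp

private lemma hBsolves : ∀ N : ℕ,
    coeff N (wSeries Bser) = if 2 ≤ N then (N : ℚ)⁻¹ else 0 := by
  intro N
  match N with
  | 0 => rw [wSeries, coeff_mk]; simp
  | 1 => rw [wSeries, coeff_mk]; simp
  | 2 =>
    rw [wSeries, coeff_mk, Finset.Icc_self, Finset.sum_singleton, if_pos (by norm_num)]
    rw [pow_two, coeff_mul, Finset.Nat.sum_antidiagonal_eq_sum_range_succ_mk]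
    simp only [Finset.sum_range_succ, Finset.sum_range_zero, Bser, coeff_mk]
    norm_num
  | (n+3) =>
    have hag : ∀ k < n + 2, coeff k Bser = coeff k (trB (n+2)) := by
      intro k hk
      rw [Bser, trB, coeff_mk, coeff_mk, if_pos hk]
    have e := wstep constantCoeff_Bser (constantCoeff_trB (n+2)) (n := n+2) (by omega) hag
    have c1 : coeff 1 Bser = -1 := by rw [Bser, coeff_mk, bc1]
    have cn2 : coeff (n+2) Bser = bc (n+2) := by rw [Bser, coeff_mk]
    have ctr : coeff (n+2) (trB (n+2)) = 0 := by
      rw [trB, coeff_mk, if_neg (by omega)]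
    rw [show n+3 = n+2+1 from rfl, e, c1, cn2, ctr, bc_rec n, if_pos (by omega)]
    push_cast
    ring

private lemma wB_eq_wX : wSeries Bser = wSeries X := by
  ext n
  rw [hBsolves n, coeff_wSeries_X n]

/- ## Composition lemmas -/

private lemma triangle_eq_square (n : ℕ) (F : ℕ → ℕ → ℚ)
    (hF : ∀ i j, n < i + j → F i j = 0) :
    (∑ m ∈ Finset.range (n+1), ∑ p ∈ Finset.HasAntidiagonal.antidiagonal m, F p.1 p.2)
      = ∑ i ∈ Finset.range (n+1), ∑ j ∈ Finset.range (n+1), F i j := by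
  have hdisj : Set.PairwiseDisjoint ↑(Finset.range (n+1))
      (fun m => (Finset.HasAntidiagonal.antidiagonal m : Finset (ℕ × ℕ))) := by
    intro a _ b _ hab
    simp only [Function.onFun]
    rw [Finset.disjoint_left]
    intro p hpa hpb
    rw [Finset.HasAntidiagonal.mem_antidiagonal] at hpa hpb
    exact hab (by omega)
  rw [← Finset.sum_biUnion hdisj]
  have hset : (Finset.range (n+1)).biUnion (fun m => Finset.HasAntidiagonal.antidiagonal m)
      = (Finset.range (n+1) ×ˢ Finset.range (n+1)).filter (fun p => p.1 + p.2 ≤ n) := by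
    ext p
    simp only [Finset.mem_biUnion, Finset.HasAntidiagonal.mem_antidiagonal, Finset.mem_filter,
      Finset.mem_product, Finset.mem_range]
    constructor
    · rintro ⟨m, hm, rfl⟩; omega
    · intro h; exact ⟨p.1 + p.2, by omega, rfl⟩
  rw [hset, Finset.sum_filter_of_ne, ← Finset.sum_product']
  intro p _ hne
  by_contra hc
  exact hne (hF p.1 p.2 (by omega))

private lemma psComp_one (C : PowerSeries ℚ) : psComp 1 C = 1 := by
  ext n
  rw [psComp, coeff_mk]
  have h : ∀ m ∈ Finset.range (n+1),
      coeff m (1 : PowerSeries ℚ) * coeff n (C ^ m)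
        = if m = 0 then coeff n (1 : PowerSeries ℚ) else 0 := by
    intro m _
    rw [coeff_one]
    by_cases h : m = 0
    · subst h; simp
    · rw [if_neg h, if_neg h, zero_mul]
  rw [Finset.sum_congr rfl h,
    Finset.sum_ite_eq' (Finset.range (n+1)) 0 (fun _ => coeff n (1 : PowerSeries ℚ)),
    if_pos (Finset.mem_range.mpr (by omega))]

private lemma psComp_mul {C : PowerSeries ℚ} (hC : constantCoeff C = 0)
    (P Q : PowerSeries ℚ) :
    psComp (P * Q) C = psComp P C * psComp Q C := by
  ext n
  rw [psComp, coeff_mk, coeff_mul]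
  have hcomp : ∀ (R : PowerSeries ℚ) (u : ℕ), u ≤ n →
      coeff u (psComp R C) = ∑ i ∈ Finset.range (n+1), coeff i R * coeff u (C ^ i) := by
    intro R u hu
    rw [psComp, coeff_mk]
    apply Finset.sum_subset
    · intro i hi
      rw [Finset.mem_range] at hi ⊢
      omega
    · intro i _ hic
      rw [Finset.mem_range] at hic
      rw [coeff_pow_eq_zero hC i u (by omega), mul_zero]
  have hR : ∀ p ∈ Finset.HasAntidiagonal.antidiagonal n,
      coeff p.1 (psComp P C) * coeff p.2 (psComp Q C)
        = ∑ i ∈ Finset.range (n+1), ∑ j ∈ Finset.range (n+1),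
            coeff i P * coeff j Q * (coeff p.1 (C ^ i) * coeff p.2 (C ^ j)) := by
    intro p hp
    rw [Finset.HasAntidiagonal.mem_antidiagonal] at hp
    rw [hcomp P p.1 (by omega), hcomp Q p.2 (by omega), Finset.sum_mul_sum]
    exact Finset.sum_congr rfl fun i _ => Finset.sum_congr rfl fun j _ => by ring
  rw [Finset.sum_congr rfl hR, Finset.sum_comm]
  have hswap : ∀ i ∈ Finset.range (n+1),
      (∑ p ∈ Finset.HasAntidiagonal.antidiagonal n, ∑ j ∈ Finset.range (n+1),
          coeff i P * coeff j Q * (coeff p.1 (C ^ i) * coeff p.2 (C ^ j)))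
        = ∑ j ∈ Finset.range (n+1),
            coeff i P * coeff j Q * coeff n (C ^ (i + j)) := by
    intro i _
    rw [Finset.sum_comm]
    apply Finset.sum_congr rfl
    intro j _
    rw [← Finset.mul_sum, ← coeff_mul, ← pow_add]
  rw [Finset.sum_congr rfl hswap]
  -- LHS: Σ_{m∈range(n+1)} coeff m (P*Q) * coeff n (C^m)
  have hL : ∀ m ∈ Finset.range (n+1),
      coeff m (P * Q) * coeff n (C ^ m)
        = ∑ p ∈ Finset.HasAntidiagonal.antidiagonal m,
            coeff p.1 P * coeff p.2 Q * coeff n (C ^ (p.1 + p.2)) := by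
    intro m _
    rw [coeff_mul, Finset.sum_mul]
    apply Finset.sum_congr rfl
    intro p hp
    rw [Finset.HasAntidiagonal.mem_antidiagonal] at hp
    rw [hp]
  rw [Finset.sum_congr rfl hL,
    triangle_eq_square n (fun i j => coeff i P * coeff j Q * coeff n (C ^ (i+j)))
      (fun i j h => by
        show coeff i P * coeff j Q * coeff n (C ^ (i+j)) = 0
        rw [coeff_pow_eq_zero hC (i+j) n h, mul_zero])]

private lemma psComp_pow {C : PowerSeries ℚ} (hC : constantCoeff C = 0)
    (P : PowerSeries ℚ) : ∀ m : ℕ, psComp (P ^ m) C = (psComp P C) ^ m := by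
  intro m
  induction m with
  | zero => rw [pow_zero, pow_zero, psComp_one]
  | succ m ih => rw [pow_succ, pow_succ, psComp_mul hC, ih]

private lemma wSeries_psComp {P C : PowerSeries ℚ} (hP : constantCoeff P = 0)
    (hC : constantCoeff C = 0) :
    wSeries (psComp P C) = psComp (wSeries P) C := by
  ext n
  have hrhs : coeff n (psComp (wSeries P) C)
      = ∑ k ∈ Finset.range (n+1), coeff k (wSeries P) * coeff n (C ^ k) := by
    rw [psComp, coeff_mk]
  rw [wSeries, coeff_mk, hrhs]
  have hL : ∀ m ∈ Finset.Icc 2 n,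
      (m:ℚ)⁻¹ * coeff n ((psComp P C) ^ m)
        = ∑ k ∈ Finset.range (n+1), (m:ℚ)⁻¹ * (coeff k (P ^ m) * coeff n (C ^ k)) := by
    intro m _
    rw [← psComp_pow hC, psComp, coeff_mk, Finset.mul_sum]
  rw [Finset.sum_congr rfl hL, Finset.sum_comm]
  apply Finset.sum_congr rfl
  intro k hk
  rw [Finset.mem_range] at hk
  rw [wSeries, coeff_mk, Finset.sum_mul]
  symm
  rw [← Finset.sum_subset (Finset.Icc_subset_Icc_right (by omega) :
      Finset.Icc 2 k ⊆ Finset.Icc 2 n)]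
  · apply Finset.sum_congr rfl
    intro m _
    ring
  · intro m hm hmk
    rw [Finset.mem_Icc] at hm hmk
    rw [coeff_pow_eq_zero hP m k (by omega)]
    ring

private lemma wSeries_eq_psComp (R : PowerSeries ℚ) :
    wSeries R = psComp (wSeries X) R := by
  ext n
  rw [wSeries, coeff_mk, psComp, coeff_mk]
  have h : ∀ m ∈ Finset.range (n+1),
      coeff m (wSeries X) * coeff n (R ^ m)
        = if 2 ≤ m then (m:ℚ)⁻¹ * coeff n (R ^ m) else 0 := by
    intro m _
    rw [coeff_wSeries_X]
    by_cases h : 2 ≤ m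
    · rw [if_pos h, if_pos h]
    · rw [if_neg h, if_neg h, zero_mul]
  rw [Finset.sum_congr rfl h, ← Finset.sum_filter]
  apply Finset.sum_congr
  · ext m
    simp only [Finset.mem_Icc, Finset.mem_filter, Finset.mem_range]
    omega
  · intro m _; rfl

/- ## Main theorem -/

/-- A formal Laurent series `s(t)` in descending powers of `t` is encoded by the
power series `B(u) = 1/s(1/u)` in `u = 1/t`, which has zero constant term; writing
`B = X·C` with `C` a unit, `s(t) = A(u)/u` where `A = C⁻¹`, i.e. `B * A = X`.

The functional equation `w(s(t)) = w(t)` for `w(t) = -1/t - log(1-1/t) = Σ_{m≥2} t^{-m}/m`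
has exactly one formal solution `s(t) ≠ t` in descending powers of `t`; it begins
`s(t) = -t + 2/3 + (4/135) t^{-2} + (8/405) t^{-3} + ⋯` (so
`A(u) = -1 + (2/3)u + 0·u² + (4/135)u³ + (8/405)u⁴ + ⋯`), and `s` is an involution:
`s(s(t)) = t`, i.e. `B ∘ B = X`. -/
theorem deck_transformation_of_lambert_curve :
    ∃ B : PowerSeries ℚ,
      (constantCoeff B = 0 ∧ B ≠ X ∧ wSeries B = wSeries X) ∧
      (∀ B' : PowerSeries ℚ,
        constantCoeff B' = 0 → B' ≠ X → wSeries B' = wSeries X → B' = B) ∧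
      psComp B B = X ∧
      ∃ A : PowerSeries ℚ, B * A = X ∧
        coeff 0 A = -1 ∧ coeff 1 A = 2 / 3 ∧ coeff 2 A = 0 ∧
        coeff 3 A = 4 / 135 ∧ coeff 4 A = 8 / 405 := by
  refine ⟨Bser, ⟨constantCoeff_Bser, ?_, wB_eq_wX⟩, ?_, ?_, ?_⟩
  · -- Bser ≠ X
    intro h
    have : coeff 1 Bser = coeff 1 X := by rw [h]
    rw [Bser, coeff_mk, bc1, coeff_one_X] at this
    norm_num at this
  · -- uniqueness
    intro B' hc0' hne hw'
    have hb1 : coeff 1 B' * coeff 1 B' = 1 := by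
      have e := congrArg (coeff 2) hw'
      rw [coeff_wSeries_X, if_pos (by norm_num)] at e
      rw [wSeries, coeff_mk, Finset.Icc_self, Finset.sum_singleton, pow_two, coeff_mul,
        Finset.Nat.sum_antidiagonal_eq_sum_range_succ_mk] at e
      norm_num [Finset.sum_range_succ, coeff_zero_eq_constantCoeff, hc0'] at e
      linarith
    have : (coeff 1 B' - 1) * (coeff 1 B' + 1) = 0 := by ring_nf; linarith
    rcases mul_eq_zero.mp this with h | h
    · exfalso
      apply hne
      apply w_unique hc0' constantCoeff_X _ _ hw'
      · rw [coeff_one_X]; linarith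
      · intro hz; rw [hz] at hb1; norm_num at hb1
    · apply w_unique hc0' constantCoeff_Bser
      · rw [Bser, coeff_mk, bc1]; linarith
      · intro hz; rw [hz] at hb1; norm_num at hb1
      · rw [hw', wB_eq_wX]
  · -- involution
    have hw2 : wSeries (psComp Bser Bser) = wSeries X := by
      rw [wSeries_psComp constantCoeff_Bser constantCoeff_Bser, wB_eq_wX,
        ← wSeries_eq_psComp, wB_eq_wX]
    have hc : constantCoeff (psComp Bser Bser) = 0 := by
      rw [← coeff_zero_eq_constantCoeff, psComp, coeff_mk]
      simp [constantCoeff_Bser, coeff_zero_eq_constantCoeff]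
    have hc1 : coeff 1 (psComp Bser Bser) = 1 := by
      rw [psComp, coeff_mk]
      simp only [Finset.sum_range_succ, Finset.sum_range_zero, pow_zero, pow_one,
        coeff_zero_eq_constantCoeff, constantCoeff_Bser]
      rw [Bser, coeff_mk, bc1]
      simp
    apply w_unique hc constantCoeff_X
    · rw [hc1, coeff_one_X]
    · rw [hc1]; norm_num
    · rw [hw2]
  · -- the series A
    have pw2 : ∀ P : PowerSeries ℚ, P^2 = P*P := fun P => by ring
    have pw3 : ∀ P : PowerSeries ℚ, P^3 = P*P*P := fun P => by ring
    have pw4 : ∀ P : PowerSeries ℚ, P^4 = P*P*P*P := fun P => by ring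
    have pw5 : ∀ P : PowerSeries ℚ, P^5 = P*P*P*P*P := fun P => by ring
    have pw6 : ∀ P : PowerSeries ℚ, P^6 = P*P*P*P*P*P := fun P => by ring
    have e3 := hBsolves 3
    rw [if_pos (by norm_num), wSeries, coeff_mk,
      show Finset.Icc 2 3 = {2, 3} by decide,
      Finset.sum_insert (by decide), Finset.sum_singleton] at e3
    simp only [pw2, pw3, coeff_mul, Finset.Nat.sum_antidiagonal_eq_sum_range_succ_mk,
      Finset.sum_range_succ, Finset.sum_range_zero, Bser, coeff_mk] at e3
    norm_num at e3
    have hb2 : bc 2 = -(2/3) := by linarith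
    have e4 := hBsolves 4
    rw [if_pos (by norm_num), wSeries, coeff_mk,
      show Finset.Icc 2 4 = {2, 3, 4} by decide,
      Finset.sum_insert (by decide), Finset.sum_insert (by decide), Finset.sum_singleton] at e4
    simp only [pw2, pw3, pw4, coeff_mul, Finset.Nat.sum_antidiagonal_eq_sum_range_succ_mk,
      Finset.sum_range_succ, Finset.sum_range_zero, Bser, coeff_mk] at e4
    rw [hb2] at e4
    norm_num at e4
    have hb3 : bc 3 = -(4/9) := by linarith
    have e5 := hBsolves 5
    rw [if_pos (by norm_num), wSeries, coeff_mk,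
      show Finset.Icc 2 5 = {2, 3, 4, 5} by decide,
      Finset.sum_insert (by decide), Finset.sum_insert (by decide),
      Finset.sum_insert (by decide), Finset.sum_singleton] at e5
    simp only [pw2, pw3, pw4, pw5, coeff_mul, Finset.Nat.sum_antidiagonal_eq_sum_range_succ_mk,
      Finset.sum_range_succ, Finset.sum_range_zero, Bser, coeff_mk] at e5
    rw [hb2, hb3] at e5
    norm_num at e5
    have hb4 : bc 4 = -(44/135) := by linarith
    have e6 := hBsolves 6
    rw [if_pos (by norm_num), wSeries, coeff_mk,
      show Finset.Icc 2 6 = {2, 3, 4, 5, 6} by decide,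
      Finset.sum_insert (by decide), Finset.sum_insert (by decide),
      Finset.sum_insert (by decide), Finset.sum_insert (by decide), Finset.sum_singleton] at e6
    simp only [pw2, pw3, pw4, pw5, pw6, coeff_mul, Finset.Nat.sum_antidiagonal_eq_sum_range_succ_mk,
      Finset.sum_range_succ, Finset.sum_range_zero, Bser, coeff_mk] at e6
    rw [hb2, hb3, hb4] at e6
    norm_num at e6
    have hb5 : bc 5 = -(104/405) := by linarith
    -- the unit U with Bser = X * U
    have hU0 : constantCoeff User ≠ 0 := by rw [constantCoeff_User]; norm_num
    have hXU : Bser = X * User := by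
      ext k
      cases k with
      | zero =>
        rw [coeff_zero_eq_constantCoeff, constantCoeff_Bser, map_mul, constantCoeff_X, zero_mul]
      | succ k =>
        rw [coeff_succ_X_mul, Bser, coeff_mk, coeff_User]
    have hUA : User * User⁻¹ = 1 := PowerSeries.mul_inv_cancel User hU0
    have q1 := congrArg (coeff 1) hUA
    have q2 := congrArg (coeff 2) hUA
    have q3 := congrArg (coeff 3) hUA
    have q4 := congrArg (coeff 4) hUA
    simp only [coeff_mul, Finset.Nat.sum_antidiagonal_eq_sum_range_succ_mk,
      Finset.sum_range_succ, Finset.sum_range_zero, coeff_User, coeff_one] at q1 q2 q3 q4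
    rw [hb2] at q1 q2 q3 q4
    rw [hb3] at q2 q3 q4
    rw [hb4] at q3 q4
    rw [hb5] at q4
    norm_num [PowerSeries.constantCoeff_inv, constantCoeff_User] at q1 q2 q3 q4
    have a0 : coeff 0 User⁻¹ = -1 := by
      rw [coeff_zero_eq_constantCoeff, PowerSeries.constantCoeff_inv, constantCoeff_User]
      norm_num
    have a1 : coeff 1 User⁻¹ = 2 / 3 := by linarith
    have a2 : coeff 2 User⁻¹ = 0 := by rw [a1] at q2; linarith
    have a3 : coeff 3 User⁻¹ = 4 / 135 := by rw [a1, a2] at q3; linarith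
    have a4 : coeff 4 User⁻¹ = 8 / 405 := by rw [a1, a2, a3] at q4; linarith
    exact ⟨User⁻¹, by rw [hXU, mul_assoc, hUA, mul_one], a0, a1, a2, a3, a4⟩
end

section
/- Define polynomial 1-forms ξ_n(t) dt by ξ_0(t) = 1 and ξ_n(t) = d/dt [t²(t-1) ξ_{n-1}(t)]. Then ξ_n(t) = (2n+1)!! t^{2n} - ((2n+3)!!/3 - (2n+1)!!) t^{2n-1} + ... + (-1)^n (n+1)! t^n; in particular ξ_n is a polynomial of degree 2n divisible by t^n, with leading coefficient (2n+1)!! and lowest-order coefficient (-1)^n (n+1)!. -/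
open Polynomial

/-- The polynomials `ξ_n(t)` defined by `ξ_0(t) = 1` and
`ξ_n(t) = d/dt [t²(t-1) ξ_{n-1}(t)]`. -/
noncomputable def xi : ℕ → Polynomial ℚ
  | 0 => 1
  | n + 1 => derivative (X ^ 2 * (X - 1) * xi n)

lemma xi_coeff_step (n k : ℕ) :
    (xi (n+1)).coeff (k+2) = (k+3) * ((xi n).coeff k - (xi n).coeff (k+1)) := by
  have h : xi (n+1) = derivative (X^3 * xi n - X^2 * xi n) := by
    show derivative _ = _
    ring_nf
  rw [h, coeff_derivative, coeff_sub]
  have h3 : (X^3 * xi n).coeff (k+2+1) = (xi n).coeff k := by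
    have := coeff_X_pow_mul (xi n) 3 k
    rwa [show k + 3 = k + 2 + 1 by ring] at this
  have h2 : (X^2 * xi n).coeff (k+2+1) = (xi n).coeff (k+1) := by
    have := coeff_X_pow_mul (xi n) 2 (k+1)
    rwa [show k + 1 + 2 = k + 2 + 1 by ring] at this
  rw [h3, h2]
  push_cast
  ring

lemma xi_one : xi 1 = C 3 * X^2 - C 2 * X := by
  show derivative ((X:ℚ[X]) ^ 2 * (X - 1) * xi 0) = _
  rw [show xi 0 = 1 from rfl, mul_one,
    show (X:ℚ[X])^2*(X-1) = X^3 - X^2 by ring]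
  rw [derivative_sub, derivative_X_pow, derivative_X_pow]
  push_cast
  ring

/-- `ξ_n(t) = (2n+1)!! t^{2n} - ((2n+3)!!/3 - (2n+1)!!) t^{2n-1} + ⋯ + (-1)^n (n+1)! t^n`:
`ξ_n` is a polynomial of degree `2n` divisible by `t^n`, with leading coefficient
`(2n+1)!!`, next coefficient `-((2n+3)!!/3 - (2n+1)!!)` (for `n ≥ 1`), and
lowest-order coefficient `(-1)^n (n+1)!`. -/
theorem xi_coefficients (n : ℕ) :
    (xi n).natDegree = 2 * n ∧
    (X : Polynomial ℚ) ^ n ∣ xi n ∧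
    (xi n).coeff (2 * n) = (Nat.doubleFactorial (2 * n + 1) : ℚ) ∧
    (xi n).coeff n = (-1 : ℚ) ^ n * (Nat.factorial (n + 1) : ℚ) ∧
    (1 ≤ n → (xi n).coeff (2 * n - 1) =
      -((Nat.doubleFactorial (2 * n + 3) : ℚ) / 3 - (Nat.doubleFactorial (2 * n + 1) : ℚ))) := by

  induction n with
  | zero =>
    refine ⟨by simp [xi], by simp, by simp [xi, Nat.doubleFactorial], by simp [xi], by omega⟩
  | succ n ih =>
    obtain ⟨hdeg, hdvd, hlead, hlow, hnext⟩ := ih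
    -- leading coefficient
    have hz1 : (xi n).coeff (2*n+1) = 0 :=
      coeff_eq_zero_of_natDegree_lt (by omega)
    have hlead' : (xi (n+1)).coeff (2*(n+1)) = ((2*(n+1)+1).doubleFactorial : ℚ) := by
      rw [show 2*(n+1) = 2*n+2 by ring, xi_coeff_step, hz1, hlead,
        show 2*n+2+1 = (2*n+1)+2 by ring, Nat.doubleFactorial_add_two]
      push_cast
      ring
    -- divisibility
    have hdvd' : (X : ℚ[X])^(n+1) ∣ xi (n+1) := by
      obtain ⟨q, hq⟩ := hdvd
      refine ⟨C ((n:ℚ)+2) * ((X-1)*q) + X * derivative ((X-1)*q), ?_⟩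
      show derivative _ = _
      rw [hq, show (X:ℚ[X])^2*(X-1)*(X^n*q) = X^(n+2) * ((X-1)*q) by ring,
        derivative_mul, derivative_X_pow]
      push_cast
      ring
    -- degree
    have hdeg' : (xi (n+1)).natDegree = 2*(n+1) := by
      apply le_antisymm
      · have h1 : (xi (n+1)).natDegree ≤ ((X:ℚ[X])^2*(X-1)*xi n).natDegree - 1 :=
          natDegree_derivative_le _
        have h2 : ((X:ℚ[X])^2*(X-1)*xi n).natDegree ≤ 3 + 2*n := by
          refine le_trans (natDegree_mul_le) ?_
          have h3 : ((X:ℚ[X])^2*(X-1)).natDegree ≤ 3 := by compute_degree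
          omega
        omega
      · apply le_natDegree_of_ne_zero
        rw [hlead']
        exact_mod_cast (Nat.doubleFactorial_pos _).ne'
    -- lowest coefficient
    have hlow' : (xi (n+1)).coeff (n+1) = (-1:ℚ)^(n+1) * ((n+1+1).factorial : ℚ) := by
      cases n with
      | zero => simp [xi_one, Nat.factorial]
      | succ m =>
        have hz2 : (xi (m+1)).coeff m = 0 :=
          (X_pow_dvd_iff.mp hdvd) m (by omega)
        rw [show m+1+1 = m+2 by ring, xi_coeff_step, hz2, hlow]
        rw [show m+1+1+1 = m+3 by ring, show m+1+1 = m+2 by ring,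
          Nat.factorial_succ (m+2)]
        push_cast
        ring
    -- next-to-leading
    have hnext' : (1 ≤ n+1) → (xi (n+1)).coeff (2*(n+1)-1) =
        -(((2*(n+1)+3).doubleFactorial : ℚ)/3 - ((2*(n+1)+1).doubleFactorial : ℚ)) := by
      intro _
      cases n with
      | zero =>
        rw [show 2*(0+1)-1 = 1 by norm_num]
        simp [xi_one, Nat.doubleFactorial]
        norm_num
      | succ m =>
        have e := xi_coeff_step (m+1) (2*m+1)
        have c1 : (xi (m+1)).coeff (2*m+1) =
            -(((2*m+5).doubleFactorial : ℚ)/3 - ((2*m+3).doubleFactorial : ℚ)) := by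
          have h := hnext (by omega)
          rw [show 2*(m+1)-1 = 2*m+1 by omega, show 2*(m+1)+3 = 2*m+5 by omega,
            show 2*(m+1)+1 = 2*m+3 by omega] at h
          exact h
        have c2 : (xi (m+1)).coeff (2*m+1+1) = ((2*m+3).doubleFactorial : ℚ) := by
          have h := hlead
          rw [show 2*(m+1)+1 = 2*m+3 by omega, show 2*(m+1) = 2*m+1+1 by omega] at h
          exact h
        have d2 : (((2*(m+1+1)+3).doubleFactorial : ℚ)) =
            ((2*m+7 : ℕ) : ℚ) * ((2*m+5 : ℕ) : ℚ) * ((2*m+3).doubleFactorial : ℚ) := by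
          rw [show 2*(m+1+1)+3 = ((2*m+3)+2)+2 by omega, Nat.doubleFactorial_add_two,
            Nat.doubleFactorial_add_two]
          push_cast; ring
        have d3 : (((2*(m+1+1)+1).doubleFactorial : ℚ)) =
            ((2*m+5 : ℕ) : ℚ) * ((2*m+3).doubleFactorial : ℚ) := by
          rw [show 2*(m+1+1)+1 = (2*m+3)+2 by omega, Nat.doubleFactorial_add_two]
          push_cast; ring
        have d1 : (((2*m+5).doubleFactorial : ℚ)) =
            ((2*m+5 : ℕ) : ℚ) * ((2*m+3).doubleFactorial : ℚ) := by
          rw [show 2*m+5 = (2*m+3)+2 by omega, Nat.doubleFactorial_add_two]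
          push_cast; ring
        rw [show 2*(m+1+1)-1 = 2*m+1+2 by omega, e, c1, c2, d2, d3, d1]
        push_cast
        ring
    exact ⟨hdeg', hdvd', hlead', hlow', hnext'⟩
end
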